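/- Let k be even, let δ ∈ ℝ^{k×k} be a matrix all of whose row sums and column sums are zero, and let X = (X₁,…,X_k) and Y = (Y₁,…,Y_k) be independent, each uniformly distributed over binary vectors in {0,1}^k of Hamming weight exactly k/2. Set Z = Σ_{(i,j)} δ_{ij} X_i Y_j. Then E[Z] = 0 and Var(Z) = E[Z²] = (E[X₁²] − E[X₁X₂])·(E[Y₁²] − E[Y₁Y₂])·‖δ‖_F² = (1/4)·E[(X₁−X₂)²]·E[(Y₁−Y₂)²]·‖δ‖_F², and consequently (1/16)·‖δ‖_F² ≤ Var(Z) ≤ (1/4)·‖δ‖_F². -/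

import Mathlib

open Finset

/-- The family of subsets of `[k]` of cardinality `k/2` (the supports of the binary
vectors of Hamming weight `k/2`). -/
def halfSubsets (k : ℕ) : Finset (Finset (Fin k)) :=
  Finset.powersetCard (k / 2) (Finset.univ : Finset (Fin k))

/-- Expectation of a function of one uniformly random weight-`k/2` binary vector
(identified with its support). -/
noncomputable def Esub {k : ℕ} (f : Finset (Fin k) → ℝ) : ℝ :=
  (∑ S ∈ halfSubsets k, f S) / ((halfSubsets k).card : ℝ)

/-- Expectation of a function of two independent uniformly random weight-`k/2`
binary vectors (identified with their supports). -/
noncomputable def Epair {k : ℕ} (f : Finset (Fin k) → Finset (Fin k) → ℝ) : ℝ :=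
  (∑ S₁ ∈ halfSubsets k, ∑ S₂ ∈ halfSubsets k, f S₁ S₂)
    / ((halfSubsets k).card : ℝ) ^ 2

/-- The coordinate `X_i` of the random binary vector with support `S`. -/
noncomputable def indX {k : ℕ} (i : Fin k) (S : Finset (Fin k)) : ℝ :=
  if i ∈ S then 1 else 0


lemma count_one {α : Type*} [DecidableEq α] (s : Finset α) {i : α} (hi : i ∈ s) (n : ℕ) :
    ((Finset.powersetCard (n+1) s).filter (fun S => i ∈ S)).card
      = (Finset.powersetCard n (s.erase i)).card := by
  apply Finset.card_nbij' (fun S => S.erase i) (fun T => insert i T)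
  · intro S hS
    simp only [Finset.mem_coe, mem_filter, Finset.mem_powersetCard] at hS
    obtain ⟨⟨hsub, hcard⟩, hiS⟩ := hS
    rw [Finset.mem_coe, Finset.mem_powersetCard]
    constructor
    · intro x hx
      rw [Finset.mem_erase] at hx ⊢
      exact ⟨hx.1, hsub hx.2⟩
    · rw [Finset.card_erase_of_mem hiS, hcard]
      omega
  · intro T hT
    rw [Finset.mem_coe, Finset.mem_powersetCard] at hT
    obtain ⟨hsub, hcard⟩ := hT
    have hiT : i ∉ T := fun h => (Finset.mem_erase.1 (hsub h)).1 rfl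
    simp only [Finset.mem_coe, mem_filter, Finset.mem_powersetCard]
    refine ⟨⟨?_, ?_⟩, Finset.mem_insert_self i T⟩
    · intro x hx
      rcases Finset.mem_insert.1 hx with rfl | hx
      · exact hi
      · exact (Finset.mem_erase.1 (hsub hx)).2
    · rw [Finset.card_insert_of_notMem hiT, hcard]
  · intro S hS
    simp only [Finset.mem_coe, mem_filter] at hS
    exact Finset.insert_erase hS.2
  · intro T hT
    rw [Finset.mem_coe, Finset.mem_powersetCard] at hT
    have hiT : i ∉ T := fun h => (Finset.mem_erase.1 (hT.1 h)).1 rfl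
    exact Finset.erase_insert hiT

lemma count_two {α : Type*} [DecidableEq α] (s : Finset α) {i j : α} (hi : i ∈ s) (hj : j ∈ s)
    (hij : i ≠ j) (n : ℕ) :
    ((Finset.powersetCard (n+2) s).filter (fun S => i ∈ S ∧ j ∈ S)).card
      = (Finset.powersetCard n ((s.erase i).erase j)).card := by
  have h1 : ((Finset.powersetCard (n+2) s).filter (fun S => i ∈ S ∧ j ∈ S)).card
      = ((Finset.powersetCard (n+1) (s.erase i)).filter (fun S => j ∈ S)).card := by
    apply Finset.card_nbij' (fun S => S.erase i) (fun T => insert i T)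
    · intro S hS
      simp only [Finset.mem_coe, mem_filter, Finset.mem_powersetCard] at hS
      obtain ⟨⟨hsub, hcard⟩, hiS, hjS⟩ := hS
      simp only [Finset.mem_coe, mem_filter, Finset.mem_powersetCard]
      refine ⟨⟨?_, ?_⟩, Finset.mem_erase.2 ⟨fun h => hij h.symm, hjS⟩⟩
      · intro x hx
        rw [Finset.mem_erase] at hx ⊢
        exact ⟨hx.1, hsub hx.2⟩
      · rw [Finset.card_erase_of_mem hiS, hcard]
        omega
    · intro T hT
      simp only [Finset.mem_coe, mem_filter, Finset.mem_powersetCard] at hT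
      obtain ⟨⟨hsub, hcard⟩, hjT⟩ := hT
      have hiT : i ∉ T := fun h => (Finset.mem_erase.1 (hsub h)).1 rfl
      simp only [Finset.mem_coe, mem_filter, Finset.mem_powersetCard]
      refine ⟨⟨?_, ?_⟩, Finset.mem_insert_self i T, Finset.mem_insert_of_mem hjT⟩
      · intro x hx
        rcases Finset.mem_insert.1 hx with rfl | hx
        · exact hi
        · exact (Finset.mem_erase.1 (hsub hx)).2
      · rw [Finset.card_insert_of_notMem hiT, hcard]
    · intro S hS
      simp only [Finset.mem_coe, mem_filter] at hS
      exact Finset.insert_erase hS.2.1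
    · intro T hT
      simp only [Finset.mem_coe, mem_filter, Finset.mem_powersetCard] at hT
      have hiT : i ∉ T := fun h => (Finset.mem_erase.1 (hT.1.1 h)).1 rfl
      exact Finset.erase_insert hiT
  rw [h1, count_one (s.erase i) (Finset.mem_erase.2 ⟨hij.symm, hj⟩) n]

lemma sum_indX {k : ℕ} (S : Finset (Fin k)) (c : Fin k → ℝ) :
    ∑ j ∈ S, c j = ∑ j, indX j S * c j := by
  rw [eq_comm]
  calc ∑ j, indX j S * c j = ∑ j, if j ∈ S then c j else 0 := by
        refine Finset.sum_congr rfl fun j _ => ?_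
        simp [indX, ite_mul]
    _ = ∑ j ∈ S, c j := by rw [Finset.sum_ite_mem, Finset.univ_inter]

lemma L0 {k : ℕ} (A : ℝ) (hA : ∀ i : Fin k, ∑ S ∈ halfSubsets k, indX i S = A)
    (c : Fin k → ℝ) :
    ∑ S ∈ halfSubsets k, (∑ j ∈ S, c j) = A * ∑ j, c j := by
  calc ∑ S ∈ halfSubsets k, (∑ j ∈ S, c j)
      = ∑ S ∈ halfSubsets k, ∑ j, indX j S * c j := by
        exact Finset.sum_congr rfl fun S _ => sum_indX S c
    _ = ∑ j, (∑ S ∈ halfSubsets k, indX j S) * c j := by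
        rw [Finset.sum_comm]
        exact Finset.sum_congr rfl fun j _ => by rw [Finset.sum_mul]
    _ = A * ∑ j, c j := by
        rw [Finset.mul_sum]
        exact Finset.sum_congr rfl fun j _ => by rw [hA]

lemma L2 {k : ℕ} (A B : ℝ)
    (hP : ∀ i i' : Fin k, ∑ S ∈ halfSubsets k, indX i S * indX i' S = if i = i' then A else B)
    (c : Fin k → ℝ) (hc : ∑ j, c j = 0) :
    ∑ S ∈ halfSubsets k, (∑ j ∈ S, c j) ^ 2 = (A - B) * ∑ j, c j ^ 2 := by
  calc ∑ S ∈ halfSubsets k, (∑ j ∈ S, c j) ^ 2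
      = ∑ S ∈ halfSubsets k, ∑ j, ∑ j', (indX j S * c j) * (indX j' S * c j') := by
        refine Finset.sum_congr rfl fun S _ => ?_
        rw [sum_indX S c, sq, Finset.sum_mul_sum]
    _ = ∑ j, ∑ j', (∑ S ∈ halfSubsets k, indX j S * indX j' S) * (c j * c j') := by
        rw [Finset.sum_comm]
        refine Finset.sum_congr rfl fun j _ => ?_
        rw [Finset.sum_comm]
        refine Finset.sum_congr rfl fun j' _ => ?_
        rw [Finset.sum_mul]
        exact Finset.sum_congr rfl fun S _ => by ring
    _ = ∑ j, ∑ j', (B * (c j * c j') + if j = j' then (A - B) * (c j * c j') else 0) := by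
        refine Finset.sum_congr rfl fun j _ => Finset.sum_congr rfl fun j' _ => ?_
        rw [hP]
        split_ifs <;> ring
    _ = ∑ j, (A - B) * c j ^ 2 := by
        refine Finset.sum_congr rfl fun j _ => ?_
        rw [Finset.sum_add_distrib, Finset.sum_ite_eq]
        simp only [Finset.mem_univ, if_true]
        have h1 : ∑ j', B * (c j * c j') = B * c j * ∑ j', c j' := by
          rw [Finset.mul_sum]
          exact Finset.sum_congr rfl fun _ _ => by ring
        rw [h1, hc]
        ring
    _ = (A - B) * ∑ j, c j ^ 2 := (Finset.mul_sum _ _ _).symm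

lemma hA_lemma {k : ℕ} (hk2 : 2 ≤ k) (i : Fin k) :
    ∑ S ∈ halfSubsets k, indX i S = (((k-1).choose (k/2-1) : ℕ) : ℝ) := by
  have hm1 : 1 ≤ k / 2 := by omega
  have : ∑ S ∈ halfSubsets k, indX i S
      = (((halfSubsets k).filter (fun S => i ∈ S)).card : ℝ) := by
    rw [← Finset.sum_boole]
    rfl
  rw [this]
  congr 1
  unfold halfSubsets
  obtain ⟨m', hm'⟩ : ∃ m', k / 2 = m' + 1 := ⟨k/2 - 1, by omega⟩
  rw [hm', count_one Finset.univ (Finset.mem_univ i) m', Finset.card_powersetCard,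
    Finset.card_erase_of_mem (Finset.mem_univ i), Finset.card_univ, Fintype.card_fin]
  norm_num

lemma hP_lemma {k : ℕ} (hk2 : 2 ≤ k) (hke : k % 2 = 0) (i i' : Fin k) :
    ∑ S ∈ halfSubsets k, indX i S * indX i' S
      = if i = i' then (((k-1).choose (k/2-1) : ℕ) : ℝ)
        else ((k/2 : ℝ) - 1) * (((k-1).choose (k/2-1) : ℕ) : ℝ) / ((k : ℝ) - 1) := by
  have hm1 : 1 ≤ k / 2 := by omega
  split_ifs with h
  · subst h
    rw [← hA_lemma hk2 i]
    refine Finset.sum_congr rfl fun S _ => ?_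
    rcases em (i ∈ S) with hS | hS <;> simp [indX, hS]
  · -- off-diagonal
    have hsum : ∑ S ∈ halfSubsets k, indX i S * indX i' S
        = (((halfSubsets k).filter (fun S => i ∈ S ∧ i' ∈ S)).card : ℝ) := by
      rw [← Finset.sum_boole]
      refine Finset.sum_congr rfl fun S _ => ?_
      simp only [indX]
      split_ifs with h1 h2 h3 <;> simp_all
    rw [hsum]
    by_cases hm2 : 2 ≤ k / 2
    · obtain ⟨m', hm'⟩ : ∃ m', k / 2 = m' + 2 := ⟨k/2 - 2, by omega⟩
      have hcard : ((halfSubsets k).filter (fun S => i ∈ S ∧ i' ∈ S)).card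
          = (k-2).choose (k/2-2) := by
        unfold halfSubsets
        have hc2 : (((Finset.univ : Finset (Fin k)).erase i).erase i').card = k - 2 := by
          rw [Finset.card_erase_of_mem
              (Finset.mem_erase.2 ⟨fun hh => h hh.symm, Finset.mem_univ i'⟩),
            Finset.card_erase_of_mem (Finset.mem_univ i), Finset.card_univ, Fintype.card_fin]
          omega
        rw [hm', count_two Finset.univ (Finset.mem_univ i) (Finset.mem_univ i') h m',
          Finset.card_powersetCard, hc2]
        norm_num
      rw [hcard]
      have hnat : (k-1) * (k-2).choose (k/2-2) = (k-1).choose (k/2-1) * (k/2-1) := by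
        have := Nat.add_one_mul_choose_eq (k-2) (k/2-2)
        have e1 : (k-2) + 1 = k - 1 := by omega
        have e2 : (k/2-2) + 1 = k/2 - 1 := by omega
        rw [e1, e2] at this
        exact this
      have hk1 : ((k:ℝ) - 1) ≠ 0 := by
        have : (2:ℝ) ≤ (k:ℝ) := by exact_mod_cast hk2
        linarith
      rw [eq_div_iff hk1]
      have hcast : (((k-1) * (k-2).choose (k/2-2) : ℕ) : ℝ)
          = (((k-1).choose (k/2-1) * (k/2-1) : ℕ) : ℝ) := Nat.cast_inj.mpr hnat
      have hhalf : (((k/2 : ℕ)) : ℝ) = (k : ℝ) / 2 := by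
        have h2 : k / 2 * 2 = k := by omega
        field_simp
        exact_mod_cast congrArg (Nat.cast : ℕ → ℝ) h2
      push_cast [Nat.cast_sub (by omega : 1 ≤ k), Nat.cast_sub hm1] at hcast
      rw [hhalf] at hcast
      linarith [hcast]
    · -- k/2 = 1, so k = 2
      have hm : k / 2 = 1 := by omega
      have hcard : ((halfSubsets k).filter (fun S => i ∈ S ∧ i' ∈ S)).card = 0 := by
        rw [Finset.card_eq_zero, Finset.filter_eq_empty_iff]
        intro S hS
        unfold halfSubsets at hS
        rw [Finset.mem_powersetCard] at hS
        rintro ⟨hiS, hi'S⟩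
        have hsub : ({i, i'} : Finset (Fin k)) ⊆ S := by
          intro x hx
          rcases Finset.mem_insert.1 hx with rfl | hx
          · exact hiS
          · rw [Finset.mem_singleton] at hx; subst hx; exact hi'S
        have := Finset.card_le_card hsub
        rw [Finset.card_pair h, hS.2, hm] at this
        omega
      have hk2' : k = 2 := by omega
      subst hk2'
      rw [hcard]
      norm_num

set_option maxHeartbeats 1000000 in
/-- Mean and variance of `Z = Σ_{i,j} δ_{ij} X_i Y_j` for a matrix `δ` with zero row
and column sums, where `X` and `Y` are independent uniform weight-`k/2` binary
vectors: `E[Z] = 0` and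
`Var(Z) = E[Z²] = (E[X₁²]−E[X₁X₂])(E[Y₁²]−E[Y₁Y₂])‖δ‖_F²
       = (1/4)E[(X₁−X₂)²]E[(Y₁−Y₂)²]‖δ‖_F²`, whence
`‖δ‖_F²/16 ≤ Var(Z) ≤ ‖δ‖_F²/4`. -/
theorem joint_perturbation_mean_variance
    (k : ℕ) (hk2 : 2 ≤ k) (hke : k % 2 = 0)
    (δ : Fin k → Fin k → ℝ)
    (hrow : ∀ i₀, ∑ j, δ i₀ j = 0) (hcol : ∀ j₀, ∑ i, δ i j₀ = 0) :
    Epair (fun S₁ S₂ => ∑ i ∈ S₁, ∑ j ∈ S₂, δ i j) = 0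
    ∧ Epair (fun S₁ S₂ => (∑ i ∈ S₁, ∑ j ∈ S₂, δ i j) ^ 2)
        = (Esub (fun S => (indX (⟨0, by omega⟩ : Fin k) S) ^ 2)
              - Esub (fun S => indX (⟨0, by omega⟩ : Fin k) S * indX (⟨1, by omega⟩ : Fin k) S))
          * (Esub (fun S => (indX (⟨0, by omega⟩ : Fin k) S) ^ 2)
              - Esub (fun S => indX (⟨0, by omega⟩ : Fin k) S * indX (⟨1, by omega⟩ : Fin k) S))
          * (∑ i, ∑ j, (δ i j) ^ 2)
    ∧ Epair (fun S₁ S₂ => (∑ i ∈ S₁, ∑ j ∈ S₂, δ i j) ^ 2)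
        = (1 / 4)
          * Esub (fun S => (indX (⟨0, by omega⟩ : Fin k) S - indX (⟨1, by omega⟩ : Fin k) S) ^ 2)
          * Esub (fun S => (indX (⟨0, by omega⟩ : Fin k) S - indX (⟨1, by omega⟩ : Fin k) S) ^ 2)
          * (∑ i, ∑ j, (δ i j) ^ 2)
    ∧ (1 / 16) * (∑ i, ∑ j, (δ i j) ^ 2)
        ≤ Epair (fun S₁ S₂ => (∑ i ∈ S₁, ∑ j ∈ S₂, δ i j) ^ 2)
    ∧ Epair (fun S₁ S₂ => (∑ i ∈ S₁, ∑ j ∈ S₂, δ i j) ^ 2)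
        ≤ (1 / 4) * (∑ i, ∑ j, (δ i j) ^ 2) := by
  have hm1 : 1 ≤ k / 2 := by omega
  set A : ℝ := (((k-1).choose (k/2-1) : ℕ) : ℝ) with hAdef
  set B : ℝ := ((k/2 : ℝ) - 1) * A / ((k : ℝ) - 1) with hBdef
  set N : ℝ := ((halfSubsets k).card : ℝ) with hNdef
  have hA : ∀ i : Fin k, ∑ S ∈ halfSubsets k, indX i S = A := fun i => hA_lemma hk2 i
  have hP : ∀ i i' : Fin k, ∑ S ∈ halfSubsets k, indX i S * indX i' S
      = if i = i' then A else B := fun i i' => hP_lemma hk2 hke i i'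
  have hNcard : (halfSubsets k).card = k.choose (k/2) := by
    unfold halfSubsets
    rw [Finset.card_powersetCard, Finset.card_univ, Fintype.card_fin]
  have hN0 : 0 < N := by
    rw [hNdef, hNcard]
    exact_mod_cast Nat.choose_pos (Nat.div_le_self k 2)
  have hkreal : (2 : ℝ) ≤ (k : ℝ) := by exact_mod_cast hk2
  have hk0 : (0 : ℝ) < (k : ℝ) := by linarith
  have hk1 : (0 : ℝ) < (k : ℝ) - 1 := by linarith
  have hhalf : (((k/2 : ℕ)) : ℝ) = (k : ℝ) / 2 := by
    have h2 : k / 2 * 2 = k := by omega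
    field_simp
    exact_mod_cast congrArg (Nat.cast : ℕ → ℝ) h2
  -- A = N / 2
  have hkA : (k : ℝ) * A = (k : ℝ) / 2 * N := by
    have hnat : k * (k-1).choose (k/2-1) = k.choose (k/2) * (k/2) := by
      have := Nat.add_one_mul_choose_eq (k-1) (k/2-1)
      have e1 : (k-1) + 1 = k := by omega
      have e2 : (k/2-1) + 1 = k/2 := by omega
      rw [e1, e2] at this
      exact this
    have hcast : ((k * (k-1).choose (k/2-1) : ℕ) : ℝ)
        = ((k.choose (k/2) * (k/2) : ℕ) : ℝ) := Nat.cast_inj.mpr hnat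
    push_cast at hcast
    rw [hhalf] at hcast
    rw [hAdef, hNdef, hNcard]
    push_cast
    linarith [hcast]
  have hA2 : A = N / 2 := by
    have h : (k : ℝ) * A = (k : ℝ) * (N / 2) := by rw [hkA]; ring
    exact mul_left_cancel₀ hk0.ne' h
  have hB0 : 0 ≤ B := by
    rw [hBdef]
    apply div_nonneg _ hk1.le
    have : (0:ℝ) ≤ A := by rw [hA2]; linarith
    nlinarith [hkreal]
  have h2 : A - B ≤ N / 2 := by rw [hA2]; linarith
  have h1 : N / 4 ≤ A - B := by
    have hX : ((k:ℝ)/2 - 1) * A / ((k : ℝ) - 1) ≤ N / 4 := by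
      rw [div_le_iff₀ hk1, hA2]
      nlinarith [hN0.le, hkreal]
    rw [hA2]
    rw [hBdef]
    linarith
  -- the two random-set lemma applications
  have hrow' : ∀ S₁ : Finset (Fin k), ∑ j, (∑ i ∈ S₁, δ i j) = 0 := by
    intro S₁
    rw [Finset.sum_comm]
    exact Finset.sum_eq_zero fun i _ => hrow i
  have hkey : ∑ S₁ ∈ halfSubsets k, ∑ S₂ ∈ halfSubsets k, (∑ i ∈ S₁, ∑ j ∈ S₂, δ i j) ^ 2
      = (A - B) ^ 2 * ∑ i, ∑ j, δ i j ^ 2 := by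
    calc ∑ S₁ ∈ halfSubsets k, ∑ S₂ ∈ halfSubsets k, (∑ i ∈ S₁, ∑ j ∈ S₂, δ i j) ^ 2
        = ∑ S₁ ∈ halfSubsets k, (A - B) * ∑ j, (∑ i ∈ S₁, δ i j) ^ 2 := by
          refine Finset.sum_congr rfl fun S₁ _ => ?_
          calc ∑ S₂ ∈ halfSubsets k, (∑ i ∈ S₁, ∑ j ∈ S₂, δ i j) ^ 2
              = ∑ S₂ ∈ halfSubsets k, (∑ j ∈ S₂, ∑ i ∈ S₁, δ i j) ^ 2 :=
                Finset.sum_congr rfl fun S₂ _ => by rw [Finset.sum_comm]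
            _ = (A - B) * ∑ j, (∑ i ∈ S₁, δ i j) ^ 2 := L2 A B hP _ (hrow' S₁)
      _ = (A - B) * ∑ j, ∑ S₁ ∈ halfSubsets k, (∑ i ∈ S₁, δ i j) ^ 2 := by
          rw [← Finset.mul_sum, Finset.sum_comm]
      _ = (A - B) * ∑ j : Fin k, ((A - B) * ∑ i, (δ i j) ^ 2) := by
          congr 1
          exact Finset.sum_congr rfl fun j _ => L2 A B hP (fun i => δ i j) (hcol j)
      _ = (A - B) ^ 2 * ∑ j, ∑ i, δ i j ^ 2 := by rw [← Finset.mul_sum]; ring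
      _ = (A - B) ^ 2 * ∑ i, ∑ j, δ i j ^ 2 := by rw [Finset.sum_comm]
  have hEpairZ2 : Epair (fun S₁ S₂ => (∑ i ∈ S₁, ∑ j ∈ S₂, δ i j) ^ 2)
      = (A - B) ^ 2 * (∑ i, ∑ j, δ i j ^ 2) / N ^ 2 := by
    rw [Epair, hkey, hNdef]
  -- Esub values
  have h01 : (⟨0, by omega⟩ : Fin k) ≠ (⟨1, by omega⟩ : Fin k) :=
    Fin.ne_of_val_ne (by norm_num)
  have hE1 : Esub (fun S => (indX (⟨0, by omega⟩ : Fin k) S) ^ 2) = A / N := by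
    rw [Esub, ← hNdef]
    congr 1
    calc ∑ S ∈ halfSubsets k, (indX (⟨0, by omega⟩ : Fin k) S) ^ 2
        = ∑ S ∈ halfSubsets k, indX (⟨0, by omega⟩ : Fin k) S * indX (⟨0, by omega⟩ : Fin k) S :=
          Finset.sum_congr rfl fun S _ => sq _
      _ = A := by rw [hP, if_pos rfl]
  have hE2 : Esub (fun S => indX (⟨0, by omega⟩ : Fin k) S * indX (⟨1, by omega⟩ : Fin k) S)
      = B / N := by
    rw [Esub, ← hNdef]
    congr 1
    rw [hP, if_neg h01]
  have hE3 : Esub (fun S => (indX (⟨0, by omega⟩ : Fin k) S - indX (⟨1, by omega⟩ : Fin k) S) ^ 2)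
      = (2 * A - 2 * B) / N := by
    rw [Esub, ← hNdef]
    congr 1
    calc ∑ S ∈ halfSubsets k,
          (indX (⟨0, by omega⟩ : Fin k) S - indX (⟨1, by omega⟩ : Fin k) S) ^ 2
        = ∑ S ∈ halfSubsets k,
            (indX (⟨0, by omega⟩ : Fin k) S * indX (⟨0, by omega⟩ : Fin k) S
              - 2 * (indX (⟨0, by omega⟩ : Fin k) S * indX (⟨1, by omega⟩ : Fin k) S)
              + indX (⟨1, by omega⟩ : Fin k) S * indX (⟨1, by omega⟩ : Fin k) S) :=
          Finset.sum_congr rfl fun S _ => by ring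
      _ = A - 2 * B + A := by
          rw [Finset.sum_add_distrib, Finset.sum_sub_distrib, ← Finset.mul_sum,
            hP, hP, hP, if_pos rfl, if_pos rfl, if_neg h01]
      _ = 2 * A - 2 * B := by ring
  have hSδ0 : (0:ℝ) ≤ ∑ i, ∑ j, δ i j ^ 2 := by positivity
  refine ⟨?_, ?_, ?_, ?_, ?_⟩
  · rw [Epair]
    have hnum : ∑ S₁ ∈ halfSubsets k, ∑ S₂ ∈ halfSubsets k, (∑ i ∈ S₁, ∑ j ∈ S₂, δ i j) = 0 := by
      refine Finset.sum_eq_zero fun S₁ _ => ?_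
      calc ∑ S₂ ∈ halfSubsets k, (∑ i ∈ S₁, ∑ j ∈ S₂, δ i j)
          = ∑ S₂ ∈ halfSubsets k, (∑ j ∈ S₂, ∑ i ∈ S₁, δ i j) :=
            Finset.sum_congr rfl fun S₂ _ => by rw [Finset.sum_comm]
        _ = A * ∑ j, ∑ i ∈ S₁, δ i j := L0 A hA _
        _ = 0 := by rw [hrow' S₁, mul_zero]
    rw [hnum, zero_div]
  · rw [hEpairZ2, hE1, hE2]
    ring
  · rw [hEpairZ2, hE3]
    ring
  · rw [hEpairZ2]
    have hsq : N ^ 2 / 16 ≤ (A - B) ^ 2 := by nlinarith [h1, hN0.le]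
    rw [le_div_iff₀ (pow_pos hN0 2)]
    have hh := mul_le_mul_of_nonneg_right hsq hSδ0
    linarith
  · rw [hEpairZ2]
    have hsq : (A - B) ^ 2 ≤ N ^ 2 / 4 := by nlinarith [h2, h1, hN0.le]
    rw [div_le_iff₀ (pow_pos hN0 2)]
    have hh := mul_le_mul_of_nonneg_right hsq hSδ0
    linarith
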